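/- Let 0 ≤ m with 2m ≤ n, and let a = (σ, 0) ∈ W(C̃_n) where σ(2i−1) = 2i and σ(2i) = 2i−1 for 1 ≤ i ≤ m, and σ(j) = −j for 2m < j ≤ n. Then an element (g,w) ∈ W(C̃_n) centralizes a if and only if g⁻¹σg = σ, w_{2i−1} = w_{2i} for all 1 ≤ i ≤ m, and w_j = 0 for all 2m < j ≤ n. In particular, the centralizer of a in W(C̃_n) is contained in W(B̃_n). -/

import Mathlib

noncomputable section

open Equiv Finset

/-- Points `±1, …, ±n`, encoded as a sign together with an index. -/
abbrev Pt (n : ℕ) := ℤˣ × Fin n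

/-- Negation of a point. -/
def negPt {n : ℕ} (x : Pt n) : Pt n := (-x.1, x.2)

/-- The hyperoctahedral group `H_n` of signed permutations: bijections `σ` of `{±1,…,±n}`
with `σ(-i) = -σ(i)`. -/
def Hgrp (n : ℕ) : Subgroup (Equiv.Perm (Pt n)) where
  carrier := {σ | ∀ x, σ (negPt x) = negPt (σ x)}
  one_mem' := fun _ => rfl
  mul_mem' := by
    intro σ τ hσ hτ x
    have hσ' : ∀ y, σ (negPt y) = negPt (σ y) := hσ
    have hτ' : ∀ y, τ (negPt y) = negPt (τ y) := hτ
    simp only [Equiv.Perm.mul_apply]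
    rw [hτ' x, hσ' (τ x)]
  inv_mem' := by
    intro σ hσ x
    have hσ' : ∀ y, σ (negPt y) = negPt (σ y) := hσ
    apply σ.injective
    rw [hσ']
    simp

lemma Hgrp_apply {n : ℕ} {σ : Equiv.Perm (Pt n)} (hσ : σ ∈ Hgrp n) (δ : ℤˣ) (k : Fin n) :
    σ (δ, k) = (δ * (σ (1, k)).1, (σ (1, k)).2) := by
  have hσ' : ∀ y, σ (negPt y) = negPt (σ y) := hσ
  rcases Int.units_eq_one_or δ with h | h <;> subst h
  · simp
  · have h2 := hσ' (1, k)
    simp only [negPt] at h2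
    simpa using h2

/-- The (right) action of a signed permutation on integer vectors:
`(v^σ)_j = ε·v_i` whenever `σ(i) = ε j`. -/
def actV {n : ℕ} (σ : Equiv.Perm (Pt n)) (v : Fin n → ℤ) : Fin n → ℤ :=
  fun j => ((σ (1, j)).1 : ℤ) * v (σ (1, j)).2

lemma actV_add {n : ℕ} (σ : Equiv.Perm (Pt n)) (a b : Fin n → ℤ) :
    actV σ (a + b) = actV σ a + actV σ b := by
  funext j; simp [actV, mul_add]

lemma actV_zero {n : ℕ} (σ : Equiv.Perm (Pt n)) : actV σ 0 = 0 := by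
  funext j; simp [actV]

lemma actV_neg {n : ℕ} (σ : Equiv.Perm (Pt n)) (v : Fin n → ℤ) :
    actV σ (-v) = -actV σ v := by
  funext j; simp [actV]

lemma actV_one {n : ℕ} (v : Fin n → ℤ) : actV 1 v = v := by
  funext j; simp [actV]

lemma actV_mul {n : ℕ} {σ : Equiv.Perm (Pt n)} (hσ : σ ∈ Hgrp n) (τ : Equiv.Perm (Pt n))
    (v : Fin n → ℤ) : actV (σ * τ) v = actV τ (actV σ v) := by
  funext j
  have h := Hgrp_apply hσ (τ (1, j)).1 (τ (1, j)).2
  rw [Prod.mk.eta] at h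
  simp only [actV, Equiv.Perm.mul_apply, h]
  push_cast
  ring

/-- The affine Weyl group of type `C̃ₙ`: pairs `(σ, v)` with `σ` a signed permutation and
`v ∈ ℤⁿ`, with multiplication `(σ,v)(τ,u) = (στ, v^τ + u)`. -/
@[ext] structure WC (n : ℕ) where
  sigma : Hgrp n
  vec : Fin n → ℤ

namespace WC

variable {n : ℕ}

instance : Mul (WC n) :=
  ⟨fun x y => ⟨x.sigma * y.sigma, actV (y.sigma : Equiv.Perm (Pt n)) x.vec + y.vec⟩⟩

instance : One (WC n) := ⟨⟨1, 0⟩⟩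

instance : Inv (WC n) :=
  ⟨fun x => ⟨x.sigma⁻¹, -actV ((x.sigma⁻¹ : Hgrp n) : Equiv.Perm (Pt n)) x.vec⟩⟩

@[simp] lemma mul_sigma (x y : WC n) : (x * y).sigma = x.sigma * y.sigma := rfl
@[simp] lemma mul_vec (x y : WC n) :
    (x * y).vec = actV (y.sigma : Equiv.Perm (Pt n)) x.vec + y.vec := rfl
@[simp] lemma one_sigma : (1 : WC n).sigma = 1 := rfl
@[simp] lemma one_vec : (1 : WC n).vec = 0 := rfl
@[simp] lemma inv_sigma (x : WC n) : (x⁻¹).sigma = x.sigma⁻¹ := rfl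
@[simp] lemma inv_vec (x : WC n) :
    (x⁻¹).vec = -actV ((x.sigma⁻¹ : Hgrp n) : Equiv.Perm (Pt n)) x.vec := rfl

instance : Group (WC n) where
  mul_assoc a b c := by
    refine WC.ext ?_ ?_
    · exact mul_assoc _ _ _
    · show actV (c.sigma : Equiv.Perm (Pt n))
          (actV (b.sigma : Equiv.Perm (Pt n)) a.vec + b.vec) + c.vec
        = actV (((b.sigma * c.sigma : Hgrp n)) : Equiv.Perm (Pt n)) a.vec
          + (actV (c.sigma : Equiv.Perm (Pt n)) b.vec + c.vec)
      rw [actV_add]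
      have hc : (((b.sigma * c.sigma : Hgrp n)) : Equiv.Perm (Pt n))
          = (b.sigma : Equiv.Perm (Pt n)) * (c.sigma : Equiv.Perm (Pt n)) := rfl
      rw [hc, actV_mul b.sigma.2]
      abel
  one_mul a := by
    refine WC.ext (one_mul _) ?_
    show actV (a.sigma : Equiv.Perm (Pt n)) 0 + a.vec = a.vec
    rw [actV_zero, zero_add]
  mul_one a := by
    refine WC.ext (mul_one _) ?_
    show actV ((1 : Hgrp n) : Equiv.Perm (Pt n)) a.vec + 0 = a.vec
    have h1 : ((1 : Hgrp n) : Equiv.Perm (Pt n)) = 1 := rfl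
    rw [h1, actV_one, add_zero]
  inv_mul_cancel a := by
    refine WC.ext (inv_mul_cancel _) ?_
    show actV (a.sigma : Equiv.Perm (Pt n))
        (-actV ((a.sigma⁻¹ : Hgrp n) : Equiv.Perm (Pt n)) a.vec) + a.vec = 0
    rw [actV_neg, ← actV_mul (a.sigma⁻¹ : Hgrp n).2]
    have h1 : ((a.sigma⁻¹ : Hgrp n) : Equiv.Perm (Pt n)) * (a.sigma : Equiv.Perm (Pt n)) = 1 := by
      rw [← Subgroup.coe_mul, inv_mul_cancel, Subgroup.coe_one]
    rw [h1, actV_one, neg_add_cancel]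

end WC

/-- `Σw`: the coordinate sum of the translation part. -/
def sumV {n : ℕ} (x : WC n) : ℤ := ∑ i, x.vec i

/-- `minus(w)`: the number of `i ∈ {1,…,n}` with `σ(i) < 0`. -/
def minusCard {n : ℕ} (x : WC n) : ℕ :=
  (Finset.univ.filter fun i : Fin n => ((x.sigma : Equiv.Perm (Pt n)) (1, i)).1 = -1).card
lemma permOf_bij {n : ℕ} (σ : Hgrp n) :
    Function.Bijective (fun i : Fin n => ((σ : Equiv.Perm (Pt n)) (1, i)).2) := by
  rw [Fintype.bijective_iff_injective_and_card]
  refine ⟨?_, rfl⟩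
  intro i j hij
  simp only at hij
  have hmem : ∀ y, (σ : Equiv.Perm (Pt n)) (negPt y) = negPt ((σ : Equiv.Perm (Pt n)) y) := σ.2
  by_cases h1 : ((σ : Equiv.Perm (Pt n)) (1, i)).1 = ((σ : Equiv.Perm (Pt n)) (1, j)).1
  · have heq : (σ : Equiv.Perm (Pt n)) (1, i) = (σ : Equiv.Perm (Pt n)) (1, j) :=
      Prod.ext h1 hij
    have h2 := (σ : Equiv.Perm (Pt n)).injective heq
    exact congrArg Prod.snd h2
  · exfalso
    have hfst : ((σ : Equiv.Perm (Pt n)) (1, i)).1 = -((σ : Equiv.Perm (Pt n)) (1, j)).1 := by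
      rcases Int.units_eq_one_or ((σ : Equiv.Perm (Pt n)) (1, i)).1 with ha | ha <;>
        rcases Int.units_eq_one_or ((σ : Equiv.Perm (Pt n)) (1, j)).1 with hb | hb <;>
        first
          | exact absurd (ha.trans hb.symm) h1
          | simp [ha, hb]
    have hne : (σ : Equiv.Perm (Pt n)) (1, i) = negPt ((σ : Equiv.Perm (Pt n)) (1, j)) :=
      Prod.ext hfst hij
    rw [← hmem (1, j)] at hne
    have h3 := (σ : Equiv.Perm (Pt n)).injective hne
    have h4 := congrArg Prod.fst h3
    simp only [negPt] at h4
    exact absurd h4 (by decide)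

/-- The underlying (unsigned) permutation of `{1,…,n}` induced by a signed permutation. -/
def permOf {n : ℕ} (σ : Hgrp n) : Equiv.Perm (Fin n) :=
  Equiv.ofBijective _ (permOf_bij σ)

@[simp] lemma permOf_apply {n : ℕ} (σ : Hgrp n) (i : Fin n) :
    permOf σ i = ((σ : Equiv.Perm (Pt n)) (1, i)).2 := rfl

lemma unitsCast_zmod2 (ε : ℤˣ) : (((ε : ℤ) : ZMod 2)) = 1 := by
  rcases Int.units_eq_one_or ε with h | h <;> subst h <;> decide

lemma sumV_mul {n : ℕ} (x y : WC n) :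
    ((sumV (x * y) : ℤ) : ZMod 2) = ((sumV x : ℤ) : ZMod 2) + ((sumV y : ℤ) : ZMod 2) := by
  have key : ∀ (σ : Hgrp n) (v : Fin n → ℤ),
      (∑ i, ((actV (σ : Equiv.Perm (Pt n)) v i : ℤ) : ZMod 2)) = ∑ i, ((v i : ℤ) : ZMod 2) := by
    intro σ v
    have hterm : ∀ i, ((actV (σ : Equiv.Perm (Pt n)) v i : ℤ) : ZMod 2)
        = ((v (permOf σ i) : ℤ) : ZMod 2) := by
      intro i
      show ((((((σ : Equiv.Perm (Pt n)) (1, i)).1 : ℤ)) * v (((σ : Equiv.Perm (Pt n)) (1, i)).2) : ℤ) : ZMod 2) = _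
      push_cast
      rw [unitsCast_zmod2, one_mul]
      rfl
    rw [Finset.sum_congr rfl (fun i _ => hterm i)]
    exact Equiv.sum_comp (permOf σ) (fun i => ((v i : ℤ) : ZMod 2))
  have hvec : (x * y).vec = actV (y.sigma : Equiv.Perm (Pt n)) x.vec + y.vec := rfl
  unfold sumV
  rw [hvec]
  have hsplit : (∑ i, (actV (y.sigma : Equiv.Perm (Pt n)) x.vec + y.vec) i)
      = (∑ i, actV (y.sigma : Equiv.Perm (Pt n)) x.vec i) + ∑ i, y.vec i := by
    rw [← Finset.sum_add_distrib]; rfl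
  rw [hsplit]
  push_cast
  rw [key y.sigma x.vec]

lemma minusCard_one {n : ℕ} : minusCard (1 : WC n) = 0 := by
  unfold minusCard
  rw [Finset.card_eq_zero, Finset.filter_eq_empty_iff]
  intro i _
  show ¬ (((1 : Hgrp n) : Equiv.Perm (Pt n)) (1, i)).1 = -1
  simp only [OneMemClass.coe_one, Equiv.Perm.one_apply]
  decide

lemma ite_units_mul (u w : ℤˣ) :
    ((if u * w = -1 then (1 : ZMod 2) else 0)) =
      (if u = -1 then (1 : ZMod 2) else 0) + (if w = -1 then (1 : ZMod 2) else 0) := by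
  rcases Int.units_eq_one_or u with h | h <;> rcases Int.units_eq_one_or w with h' | h' <;>
    subst h <;> subst h' <;> decide

lemma minusCard_mul {n : ℕ} (x y : WC n) :
    ((minusCard (x * y) : ℕ) : ZMod 2) = (minusCard x : ZMod 2) + (minusCard y : ZMod 2) := by
  have hσ : ∀ i : Fin n, ((x * y).sigma : Equiv.Perm (Pt n)) (1, i)
      = (x.sigma : Equiv.Perm (Pt n)) ((y.sigma : Equiv.Perm (Pt n)) (1, i)) := fun i => rfl
  unfold minusCard
  rw [Finset.card_filter, Finset.card_filter, Finset.card_filter]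
  push_cast
  have step : ∀ i : Fin n,
      ((if (((x * y).sigma : Equiv.Perm (Pt n)) (1, i)).1 = -1 then (1 : ZMod 2) else 0))
      = (if ((y.sigma : Equiv.Perm (Pt n)) (1, i)).1 = -1 then (1 : ZMod 2) else 0)
        + (if ((x.sigma : Equiv.Perm (Pt n)) (1, permOf y.sigma i)).1 = -1
            then (1 : ZMod 2) else 0) := by
    intro i
    rw [hσ i]
    have h := Hgrp_apply x.sigma.2 ((y.sigma : Equiv.Perm (Pt n)) (1, i)).1
      ((y.sigma : Equiv.Perm (Pt n)) (1, i)).2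
    rw [Prod.mk.eta] at h
    rw [h]
    exact ite_units_mul _ _
  calc (∑ i : Fin n, if (((x * y).sigma : Equiv.Perm (Pt n)) (1, i)).1 = -1
          then (1 : ZMod 2) else 0)
      = ∑ i : Fin n, ((if ((y.sigma : Equiv.Perm (Pt n)) (1, i)).1 = -1 then (1 : ZMod 2) else 0)
        + (if ((x.sigma : Equiv.Perm (Pt n)) (1, permOf y.sigma i)).1 = -1
            then (1 : ZMod 2) else 0)) := Finset.sum_congr rfl (fun i _ => step i)
    _ = (∑ i : Fin n, if ((y.sigma : Equiv.Perm (Pt n)) (1, i)).1 = -1 then (1 : ZMod 2) else 0)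
        + ∑ i : Fin n, (if ((x.sigma : Equiv.Perm (Pt n)) (1, permOf y.sigma i)).1 = -1
            then (1 : ZMod 2) else 0) := Finset.sum_add_distrib
    _ = (∑ i : Fin n, if ((x.sigma : Equiv.Perm (Pt n)) (1, i)).1 = -1 then (1 : ZMod 2) else 0)
        + ∑ i : Fin n, (if ((y.sigma : Equiv.Perm (Pt n)) (1, i)).1 = -1
            then (1 : ZMod 2) else 0) := by
          rw [add_comm]
          congr 1
          exact Equiv.sum_comp (permOf y.sigma)
            (fun k => if ((x.sigma : Equiv.Perm (Pt n)) (1, k)).1 = -1 then (1 : ZMod 2) else 0)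
lemma even_int_iff_zmod {a : ℤ} : Even a ↔ ((a : ZMod 2) = 0) := by
  rw [ZMod.intCast_zmod_eq_zero_iff_dvd a 2, Int.even_iff]
  push_cast
  omega

lemma sumV_one {n : ℕ} : sumV (1 : WC n) = 0 := by simp [sumV]

/-- The affine Weyl group of type `B̃ₙ`: the elements `w` of `W(C̃ₙ)` with `Σw` even. -/
def WB (n : ℕ) : Subgroup (WC n) where
  carrier := {w | Even (sumV w)}
  one_mem' := by
    show Even (sumV (1 : WC n))
    rw [sumV_one]
    exact ⟨0, by norm_num⟩
  mul_mem' := by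
    intro a b ha hb
    have ha' : ((sumV a : ℤ) : ZMod 2) = 0 := even_int_iff_zmod.mp ha
    have hb' : ((sumV b : ℤ) : ZMod 2) = 0 := even_int_iff_zmod.mp hb
    refine even_int_iff_zmod.mpr ?_
    rw [sumV_mul, ha', hb', add_zero]
  inv_mem' := by
    intro a ha
    have ha' : ((sumV a : ℤ) : ZMod 2) = 0 := even_int_iff_zmod.mp ha
    refine even_int_iff_zmod.mpr ?_
    have h1 := sumV_mul a⁻¹ a
    rw [inv_mul_cancel, sumV_one, ha', add_zero] at h1
    simpa using h1.symm

lemma intModEq_two_iff {a b : ℤ} : a ≡ b [ZMOD 2] ↔ ((a : ZMod 2) = (b : ZMod 2)) :=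
  (ZMod.intCast_eq_intCast_iff a b 2).symm

/-- The second copy `B̄(B̃ₙ)` of the affine Weyl group of type `B̃ₙ` inside `W(C̃ₙ)`:
elements with `Σw ≡ minus(w) (mod 2)`. -/
def Bbar (n : ℕ) : Subgroup (WC n) where
  carrier := {w | sumV w ≡ (minusCard w : ℤ) [ZMOD 2]}
  one_mem' := by
    show sumV (1 : WC n) ≡ ((minusCard (1 : WC n) : ℤ)) [ZMOD 2]
    rw [sumV_one, minusCard_one]
    rfl
  mul_mem' := by
    intro a b ha hb
    have ha' := intModEq_two_iff.mp ha
    have hb' := intModEq_two_iff.mp hb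
    refine intModEq_two_iff.mpr ?_
    rw [sumV_mul, ha', hb']
    push_cast at ha' hb' ⊢
    rw [minusCard_mul]
  inv_mem' := by
    intro a ha
    have ha' := intModEq_two_iff.mp ha
    refine intModEq_two_iff.mpr ?_
    have h1 := sumV_mul a⁻¹ a
    have h2 := minusCard_mul a⁻¹ a
    rw [inv_mul_cancel, sumV_one] at h1
    rw [inv_mul_cancel, minusCard_one] at h2
    push_cast at ha' h1 h2 ⊢
    linear_combination h1.symm - h2.symm - ha'

/-- The affine Weyl group of type `D̃ₙ`, as the intersection of the two `B̃ₙ`'s. -/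
def WD (n : ℕ) : Subgroup (WC n) := WB n ⊓ Bbar n

instance : DecidablePred (fun k : ℤ => Even k) := fun _ => decidable_of_iff _ Int.even_iff.symm
instance : DecidablePred (fun k : ℤ => Odd k) := fun _ => decidable_of_iff _ Int.odd_iff.symm

/-- The labelled cycle type `(m, k_e, k_o, l)` of an element of `W(C̃ₙ)` (intended for
involutions): `m` is the number of 2-cycles of `σ`, `k_e` (resp. `k_o`) is the number of
`i` with `σ(i) = -i` whose label `v_i` is even (resp. odd), and `l` is the number of fixed
points of `σ`. -/
def lct {n : ℕ} (x : WC n) : ℕ × ℕ × ℕ × ℕ :=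
  ((Finset.univ.filter fun i : Fin n => ((x.sigma : Equiv.Perm (Pt n)) (1, i)).2 ≠ i).card / 2,
   (Finset.univ.filter fun i : Fin n =>
      (x.sigma : Equiv.Perm (Pt n)) (1, i) = (-1, i) ∧ Even (x.vec i)).card,
   (Finset.univ.filter fun i : Fin n =>
      (x.sigma : Equiv.Perm (Pt n)) (1, i) = (-1, i) ∧ Odd (x.vec i)).card,
   (Finset.univ.filter fun i : Fin n => (x.sigma : Equiv.Perm (Pt n)) (1, i) = (1, i)).card)

/-- `f(x)`: twice the sum of the labels over one chosen entry of each 2-cycle (we choose the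
entry with the smaller index), plus the sum of the labels over the negative 1-cycles.  Only
its residue modulo 4 is ever used, and for involutions that residue does not depend on the
choice of entries. -/
def fval {n : ℕ} (x : WC n) : ℤ :=
  2 * (∑ i ∈ Finset.univ.filter
        (fun i : Fin n => i < ((x.sigma : Equiv.Perm (Pt n)) (1, i)).2), x.vec i)
  + ∑ i ∈ Finset.univ.filter
      (fun i : Fin n => (x.sigma : Equiv.Perm (Pt n)) (1, i) = (-1, i)), x.vec i

/-- The commuting graph on a set `X` of elements of a group: vertices are the elements
of `X`, and distinct vertices are adjacent exactly when they commute.  When `X` is a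
conjugacy class of involutions this is the commuting involution graph `C(G,X)`. -/
def commGraph {M : Type*} [Group M] (X : Set M) : SimpleGraph X where
  Adj a b := a ≠ b ∧ (a : M) * (b : M) = (b : M) * (a : M)
  symm := ⟨fun a b h => ⟨h.1.symm, h.2.symm⟩⟩
  loopless := ⟨fun a h => h.1 rfl⟩

/-- The conjugacy class of `x` under conjugation by a subgroup `G`. -/
def ConjugacyClassOf {M : Type*} [Group M] (G : Subgroup M) (x : M) : Set M :=
  {y | ∃ g ∈ G, g⁻¹ * x * g = y}

/-- `X` is a conjugacy class of involutions of the subgroup `G`. -/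
def IsInvolutionConjClass {M : Type*} [Group M] (G : Subgroup M) (X : Set M) : Prop :=
  ∃ x ∈ G, orderOf x = 2 ∧ X = ConjugacyClassOf G x

/-- Sign change at the single coordinate `k`. -/
def negAt {n : ℕ} (k : Fin n) : Equiv.Perm (Pt n) :=
  Function.Involutive.toPerm (fun p => if p.2 = k then (-p.1, p.2) else p) (by
    intro p
    by_cases h : p.2 = k <;> simp [h, Prod.ext_iff])

lemma negAt_mem {n : ℕ} (k : Fin n) : negAt k ∈ Hgrp n := by
  intro p
  show (if (negPt p).2 = k then (-(negPt p).1, (negPt p).2) else negPt p)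
      = negPt (if p.2 = k then (-p.1, p.2) else p)
  by_cases h : p.2 = k <;> simp [negPt, h]

/-- The positive transposition of the coordinates `a` and `b`. -/
def swapPos {n : ℕ} (a b : Fin n) : Equiv.Perm (Pt n) :=
  Equiv.prodCongr (Equiv.refl ℤˣ) (Equiv.swap a b)

lemma swapPos_mem {n : ℕ} (a b : Fin n) : swapPos a b ∈ Hgrp n := fun _ => rfl

/-- The negative transposition of the coordinates `a` and `b` (for `a ≠ b` it sends
`a ↦ -b` and `b ↦ -a`). -/
def negSwap {n : ℕ} (a b : Fin n) : Equiv.Perm (Pt n) := negAt b * negAt a * swapPos a b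

lemma negSwap_mem {n : ℕ} (a b : Fin n) : negSwap a b ∈ Hgrp n :=
  mul_mem (mul_mem (negAt_mem b) (negAt_mem a)) (swapPos_mem a b)

/-- Constructor for elements of `W(C̃ₙ)`. -/
def mkW {n : ℕ} (σ : Equiv.Perm (Pt n)) (h : σ ∈ Hgrp n) (v : Fin n → ℤ) : WC n := ⟨⟨σ, h⟩, v⟩

/-- The simple reflection `r₁ = (σ, 0)` with `σ(1) = -1` (take `k = 0`); more generally
`(σ, 0)` with `σ(k) = -k`. -/
def rFirstGen (n : ℕ) (k : Fin n) : WC n := mkW (negAt k) (negAt_mem k) 0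

/-- The simple reflections `rᵢ = (σ, 0)`, `2 ≤ i ≤ n`, where `σ` exchanges `a` and `b`
positively (take `a, b` adjacent). -/
def swapGen (n : ℕ) (a b : Fin n) : WC n := mkW (swapPos a b) (swapPos_mem a b) 0

/-- The simple reflection `r_{n+1} = (σ, eₙ)` with `σ(n) = -n` (take `k = n-1`). -/
def rLastGen (n : ℕ) (k : Fin n) : WC n := mkW (negAt k) (negAt_mem k) (Pi.single k 1)

/-- The reflections `s = (σ, e_{n-1} + eₙ)` (take `a = n-2`, `b = n-1`) and
`t = (σ, e₁ + e₂)` (take `a = 0`, `b = 1`), where `σ(a) = -b`, `σ(b) = -a`. -/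
def negSwapGen (n : ℕ) (a b : Fin n) : WC n :=
  mkW (negSwap a b) (negSwap_mem a b) (Pi.single a 1 + Pi.single b 1)

/-- The projection `π : W(C̃ₙ) → Hₙ`, `(σ, v) ↦ σ`. -/
def projHom (n : ℕ) : WC n →* Equiv.Perm (Pt n) where
  toFun x := (x.sigma : Equiv.Perm (Pt n))
  map_one' := rfl
  map_mul' _ _ := rfl

/-- The action of a signed permutation on real vectors. -/
def actR {n : ℕ} (σ : Equiv.Perm (Pt n)) (u : Fin n → ℝ) : Fin n → ℝ :=
  fun j => (((σ (1, j)).1 : ℤ) : ℝ) * u (σ (1, j)).2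

/-- The affine action of `w = (σ,v) ∈ W(C̃ₙ)` on `ℝⁿ`: `u ↦ u^σ + v`. -/
def affAct {n : ℕ} (x : WC n) : (Fin n → ℝ) → (Fin n → ℝ) :=
  fun u => actR (x.sigma : Equiv.Perm (Pt n)) u + fun i => ((x.vec i : ℤ) : ℝ)

/-- The affine involution `φ` of `ℝⁿ` with `φ(u)ᵢ = 1/2 - u_{n+1-i}`. -/
def phiR (n : ℕ) : (Fin n → ℝ) → (Fin n → ℝ) := fun u i => 1 / 2 - u i.rev

/-- Auxiliary involution pairing `2i ↔ 2i+1` below `2m` and fixing the rest. -/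
def invoAux (n m : ℕ) (j : Fin n) : Fin n :=
  ⟨if (j:ℕ) < 2*m ∧ 2*m ≤ n then (if (j:ℕ) % 2 = 0 then (j:ℕ)+1 else (j:ℕ)-1) else (j:ℕ), by
    by_cases h1 : (j:ℕ) < 2*m ∧ 2*m ≤ n
    · rw [if_pos h1]
      by_cases h2 : (j:ℕ) % 2 = 0
      · rw [if_pos h2]; omega
      · rw [if_neg h2]; omega
    · rw [if_neg h1]; exact j.isLt⟩

lemma invoAux_val_even {n m : ℕ} {j : Fin n} (hm : 2*m ≤ n) (h : (j:ℕ) < 2*m)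
    (he : (j:ℕ) % 2 = 0) : (invoAux n m j : ℕ) = (j:ℕ)+1 := by
  simp [invoAux, h, he, hm]

lemma invoAux_val_odd {n m : ℕ} {j : Fin n} (hm : 2*m ≤ n) (h : (j:ℕ) < 2*m)
    (ho : (j:ℕ) % 2 = 1) : (invoAux n m j : ℕ) = (j:ℕ)-1 := by
  simp [invoAux, h, hm]
  omega

lemma invoAux_val_ge {n m : ℕ} {j : Fin n} (h : ¬ (j:ℕ) < 2*m) :
    (invoAux n m j : ℕ) = (j:ℕ) := by
  simp [invoAux, h]

lemma invoAux_invoAux {n m : ℕ} (hm : 2*m ≤ n) (j : Fin n) :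
    invoAux n m (invoAux n m j) = j := by
  apply Fin.ext
  by_cases h : (j:ℕ) < 2*m
  · rcases Nat.even_or_odd (j:ℕ) with he | ho
    · have he' : (j:ℕ) % 2 = 0 := Nat.even_iff.mp he
      have h1 := invoAux_val_even hm h he'
      rw [invoAux_val_odd hm (by omega) (by omega), h1]
      omega
    · have ho' : (j:ℕ) % 2 = 1 := Nat.odd_iff.mp ho
      have h1 := invoAux_val_odd hm h ho'
      rw [invoAux_val_even hm (by omega) (by omega), h1]
      omega
  · rw [invoAux_val_ge (by rw [invoAux_val_ge h]; exact h), invoAux_val_ge h]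

set_option maxHeartbeats 1000000 in
theorem centralizer_of_base_involution (n m : ℕ) (hn : 2 ≤ n) (hm : 2 * m ≤ n)
    (a : WC n) (hvec : a.vec = 0)
    (hpair : ∀ i : Fin n, ∀ hi : (i : ℕ) < 2 * m,
      (∀ he : (i : ℕ) % 2 = 0,
        (a.sigma : Equiv.Perm (Pt n)) (1, i) = (1, ⟨(i : ℕ) + 1, by omega⟩)) ∧
      (∀ ho : (i : ℕ) % 2 = 1,
        (a.sigma : Equiv.Perm (Pt n)) (1, i) = (1, ⟨(i : ℕ) - 1, by omega⟩)))
    (hneg : ∀ i : Fin n, 2 * m ≤ (i : ℕ) →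
      (a.sigma : Equiv.Perm (Pt n)) (1, i) = (-1, i)) :
    (∀ g : WC n, g * a = a * g ↔
      (g.sigma⁻¹ * a.sigma * g.sigma = a.sigma ∧
        (∀ i : ℕ, ∀ hi : i < m, g.vec ⟨2 * i, by omega⟩ = g.vec ⟨2 * i + 1, by omega⟩) ∧
        (∀ j : Fin n, 2 * m ≤ (j : ℕ) → g.vec j = 0))) ∧
    (∀ g : WC n, g * a = a * g → g ∈ WB n) := by
  -- evaluation of the action of `a.sigma`
  have heval_e : ∀ v : Fin n → ℤ, ∀ j : Fin n, ∀ hj : (j:ℕ) < 2*m, ∀ he : (j:ℕ)%2 = 0,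
      actV (a.sigma : Equiv.Perm (Pt n)) v j = v ⟨(j:ℕ)+1, by omega⟩ := by
    intro v j hj he
    simp [actV, (hpair j hj).1 he]
  have heval_o : ∀ v : Fin n → ℤ, ∀ j : Fin n, ∀ hj : (j:ℕ) < 2*m, ∀ ho : (j:ℕ)%2 = 1,
      actV (a.sigma : Equiv.Perm (Pt n)) v j = v ⟨(j:ℕ)-1, by omega⟩ := by
    intro v j hj ho
    simp [actV, (hpair j hj).2 ho]
  have heval_n : ∀ v : Fin n → ℤ, ∀ j : Fin n, 2*m ≤ (j:ℕ) →
      actV (a.sigma : Equiv.Perm (Pt n)) v j = -v j := by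
    intro v j hj
    simp [actV, hneg j hj]
  -- characterization of fixed vectors
  have hact : ∀ v : Fin n → ℤ, actV (a.sigma : Equiv.Perm (Pt n)) v = v ↔
      ((∀ i : ℕ, ∀ hi : i < m, v ⟨2 * i, by omega⟩ = v ⟨2 * i + 1, by omega⟩) ∧
        (∀ j : Fin n, 2 * m ≤ (j : ℕ) → v j = 0)) := by
    intro v
    constructor
    · intro h
      constructor
      · intro i hi
        have h1 := heval_e v ⟨2*i, by omega⟩ (by simp; omega) (by simp [Nat.mul_mod_right])
        have h2 := congrFun h (⟨2*i, by omega⟩ : Fin n)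
        exact (h2.symm.trans h1)
      · intro j hj
        have h1 := heval_n v j hj
        have h2 := congrFun h j
        omega
    · rintro ⟨hp, hz⟩
      funext j
      by_cases hj : (j:ℕ) < 2*m
      · rcases Nat.even_or_odd (j:ℕ) with he | ho
        · have he' : (j:ℕ) % 2 = 0 := Nat.even_iff.mp he
          rw [heval_e v j hj he']
          have hi : (j:ℕ)/2 < m := by omega
          have := hp ((j:ℕ)/2) hi
          have e1 : (⟨2 * ((j:ℕ)/2), by omega⟩ : Fin n) = j := Fin.ext (by simp; omega)
          have e2 : (⟨2 * ((j:ℕ)/2) + 1, by omega⟩ : Fin n) = (⟨(j:ℕ)+1, by omega⟩ : Fin n) :=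
            Fin.ext (by simp; omega)
          simp only [e1, e2] at this
          exact this.symm
        · have ho' : (j:ℕ) % 2 = 1 := Nat.odd_iff.mp ho
          rw [heval_o v j hj ho']
          have hi : (j:ℕ)/2 < m := by omega
          have := hp ((j:ℕ)/2) hi
          have e1 : (⟨2 * ((j:ℕ)/2), by omega⟩ : Fin n) = (⟨(j:ℕ)-1, by omega⟩ : Fin n) :=
            Fin.ext (by simp; omega)
          have e2 : (⟨2 * ((j:ℕ)/2) + 1, by omega⟩ : Fin n) = j := Fin.ext (by simp; omega)
          simp only [e1, e2] at this
          exact this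
      · rw [heval_n v j (by omega), hz j (by omega)]
        simp
  -- characterization of commuting
  have key : ∀ g : WC n, g * a = a * g ↔
      (g.sigma⁻¹ * a.sigma * g.sigma = a.sigma ∧
        actV (a.sigma : Equiv.Perm (Pt n)) g.vec = g.vec) := by
    intro g
    have hsig : g.sigma⁻¹ * a.sigma * g.sigma = a.sigma ↔ g.sigma * a.sigma = a.sigma * g.sigma := by
      rw [mul_assoc, inv_mul_eq_iff_eq_mul]
      exact ⟨fun h => h.symm, fun h => h.symm⟩
    constructor
    · intro h
      have h1 : g.sigma * a.sigma = a.sigma * g.sigma := congrArg WC.sigma h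
      have h2 := congrArg WC.vec h
      simp only [WC.mul_vec, hvec, actV_zero, add_zero, zero_add] at h2
      exact ⟨hsig.mpr h1, h2⟩
    · rintro ⟨h1, h2⟩
      refine WC.ext (hsig.mp h1) ?_
      simp only [WC.mul_vec, hvec, actV_zero, add_zero, zero_add]
      exact h2
  have main : ∀ g : WC n, g * a = a * g ↔
      (g.sigma⁻¹ * a.sigma * g.sigma = a.sigma ∧
        (∀ i : ℕ, ∀ hi : i < m, g.vec ⟨2 * i, by omega⟩ = g.vec ⟨2 * i + 1, by omega⟩) ∧
        (∀ j : Fin n, 2 * m ≤ (j : ℕ) → g.vec j = 0)) := by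
    intro g
    rw [key g, hact g.vec]
  refine ⟨main, ?_⟩
  intro g hg
  obtain ⟨-, hp, hz⟩ := (main g).mp hg
  show Even (sumV g)
  rw [even_int_iff_zmod]
  unfold sumV
  push_cast
  refine Finset.sum_ninvolution (invoAux n m) ?_ ?_ (fun _ => Finset.mem_univ _)
    (fun j => invoAux_invoAux hm j)
  · intro j
    by_cases hj : (j:ℕ) < 2*m
    · rcases Nat.even_or_odd (j:ℕ) with he | ho
      · have he' : (j:ℕ) % 2 = 0 := Nat.even_iff.mp he
        have hinv : invoAux n m j = (⟨(j:ℕ)+1, by omega⟩ : Fin n) :=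
          Fin.ext (invoAux_val_even hm hj he')
        rw [hinv]
        have := hp ((j:ℕ)/2) (by omega)
        have e1 : (⟨2 * ((j:ℕ)/2), by omega⟩ : Fin n) = j := Fin.ext (by simp; omega)
        have e2 : (⟨2 * ((j:ℕ)/2) + 1, by omega⟩ : Fin n) = (⟨(j:ℕ)+1, by omega⟩ : Fin n) :=
          Fin.ext (by simp; omega)
        simp only [e1, e2] at this
        rw [← this]
        exact CharTwo.add_self_eq_zero _
      · have ho' : (j:ℕ) % 2 = 1 := Nat.odd_iff.mp ho
        have hinv : invoAux n m j = (⟨(j:ℕ)-1, by omega⟩ : Fin n) :=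
          Fin.ext (invoAux_val_odd hm hj ho')
        rw [hinv]
        have := hp ((j:ℕ)/2) (by omega)
        have e1 : (⟨2 * ((j:ℕ)/2), by omega⟩ : Fin n) = (⟨(j:ℕ)-1, by omega⟩ : Fin n) :=
          Fin.ext (by simp; omega)
        have e2 : (⟨2 * ((j:ℕ)/2) + 1, by omega⟩ : Fin n) = j := Fin.ext (by simp; omega)
        simp only [e1, e2] at this
        rw [this]
        exact CharTwo.add_self_eq_zero _
    · have hinv : invoAux n m j = j := Fin.ext (invoAux_val_ge hj)
      rw [hinv, hz j (by omega)]
      simp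
  · intro j hj
    by_cases h : (j:ℕ) < 2*m
    · intro hc
      have hc' := congrArg Fin.val hc
      rcases Nat.even_or_odd (j:ℕ) with he | ho
      · rw [invoAux_val_even hm h (Nat.even_iff.mp he)] at hc'
        omega
      · have ho' : (j:ℕ) % 2 = 1 := Nat.odd_iff.mp ho
        rw [invoAux_val_odd hm h ho'] at hc'
        omega
    · exfalso
      apply hj
      rw [hz j (by omega)]
      simp
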